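/- With the setup of the previous example (signature with two unary symbols u, v; F X = ℕ × X on Σ-algebras): for any F-coalgebra (B, b) whose carrier B is a finitely presented Σ-algebra and any coalgebra morphism h : A → B from the free coalgebra a(x) = (0, u(x)), one has h(u(x)) ≠ h(v(x)). Consequently the unique coalgebra morphism A → ρF into the rational fixed point (the colimit of all coalgebras with finitely presentable carrier) does not merge u(x) and v(x), so ρF is not a subcoalgebra of the final coalgebra. -/
import Mathlib


/-- The congruence on the free algebra (with two unary operations given by prefixing
`true` and `false`) on `k` generators generated by a finite set `E` of pairs of terms:
the equivalence relation generated by applying arbitrary operation words to pairs in `E`. -/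
def Cong {k : ℕ} (E : Finset ((List Bool × Fin k) × (List Bool × Fin k))) :
    (List Bool × Fin k) → (List Bool × Fin k) → Prop :=
  Relation.EqvGen (fun p q => ∃ w : List Bool, ∃ e ∈ E,
    p = (w ++ e.1.1, e.1.2) ∧ q = (w ++ e.2.1, e.2.2))

/-- Let `B` be a finitely presented algebra for the signature with two unary operations
`u`, `v`: a quotient of the free algebra on `k` generators via a surjective homomorphism
`q` whose kernel is the congruence generated by a finite set `E`.  Suppose `B` carries a
coalgebra structure for `F X = ℕ × X`, i.e., homomorphisms `oB : B → ℕ` and `nB : B → B`.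
Then for any coalgebra morphism `h` from the free coalgebra on one generator `x` with
`a x = (0, u x)` (so `h` is a homomorphism with `oB (h w) = |w|` and
`nB (h w) = h (w ++ [true])`), the elements `h (u x)` and `h (v x)` are distinct.
Hence no coalgebra with finitely presented carrier merges `u x` and `v x`, and the
rational fixed point does not merge them either. -/
theorem fp_coalgebra_morphism_does_not_merge_ux_vx
    (k : ℕ) (E : Finset ((List Bool × Fin k) × (List Bool × Fin k)))
    (B : Type) (uB vB : B → B)
    (q : List Bool × Fin k → B)
    (hq : Function.Surjective q)
    (hqu : ∀ p : List Bool × Fin k, q (true :: p.1, p.2) = uB (q p))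
    (hqv : ∀ p : List Bool × Fin k, q (false :: p.1, p.2) = vB (q p))
    (hker : ∀ p p' : List Bool × Fin k, q p = q p' ↔ Cong E p p')
    (oB : B → ℕ) (nB : B → B)
    (hou : ∀ b, oB (uB b) = oB b + 1) (hov : ∀ b, oB (vB b) = oB b + 1)
    (hnu : ∀ b, nB (uB b) = uB (nB b)) (hnv : ∀ b, nB (vB b) = vB (nB b))
    (h : List Bool → B)
    (hhu : ∀ w, h (true :: w) = uB (h w)) (hhv : ∀ w, h (false :: w) = vB (h w))
    (hcoalg_o : ∀ w, oB (h w) = w.length)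
    (hcoalg_n : ∀ w, nB (h w) = h (w ++ [true])) :
    h [true] ≠ h [false] := by
  intro heq
  -- the "observation" value of q (w, i) is |w| + oB (q ([], i))
  have hoB : ∀ (w : List Bool) (i : Fin k), oB (q (w, i)) = w.length + oB (q ([], i)) := by
    intro w i
    induction w with
    | nil => simp
    | cons b w ih =>
      cases b
      · have := hqv (w, i)
        simp only at this
        rw [this, hov, ih]
        simp only [List.length_cons]
        omega
      · have := hqu (w, i)
        simp only at this
        rw [this, hou, ih]
        simp only [List.length_cons]
        omega
  set C : ℕ := (Finset.univ : Finset (Fin k)).sup (fun i => oB (q ([], i))) with hC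
  set M : ℕ := E.sup (fun e => max e.1.1.length e.2.1.length) with hM
  have hCle : ∀ i : Fin k, oB (q ([], i)) ≤ C := by
    intro i
    rw [hC]
    exact Finset.le_sup (f := fun i => oB (q ([], i))) (Finset.mem_univ i)
  -- key lemma: long words keep their first letter under the congruence
  have key : ∀ p p' : List Bool × Fin k, Cong E p p' →
      M + C < oB (q p) → p.1.head? = p'.1.head? := by
    intro p p' hc
    induction hc with
    | rel p p' hr =>
      intro hguard
      obtain ⟨w, e, he, hp, hp'⟩ := hr
      have h1 : e.1.1.length ≤ M := le_trans (le_max_left _ _) (Finset.le_sup (f := fun e => max e.1.1.length e.2.1.length) he)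
      have h2 : oB (q p) = w.length + e.1.1.length + oB (q ([], e.1.2)) := by
        rw [hp, hoB]; simp
      have hw : w ≠ [] := by
        intro hwnil
        subst hwnil
        simp only [List.length_nil] at h2
        have := hCle e.1.2
        omega
      obtain ⟨a, w', rfl⟩ := List.exists_cons_of_ne_nil hw
      rw [hp, hp']
      simp
    | refl p => intro _; rfl
    | symm p p' hc ih =>
      intro hguard
      have hqq : q p = q p' := (hker p p').mpr hc
      exact (ih (by rw [hqq]; exact hguard)).symm
    | trans p m p' h1 h2 ih1 ih2 =>
      intro hguard
      have hqq : q p = q m := (hker p m).mpr h1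
      exact (ih1 hguard).trans (ih2 (by rw [← hqq]; exact hguard))
  -- from h [true] = h [false], all later steps coincide
  have hchain : ∀ n, h (true :: List.replicate n true) = h (false :: List.replicate n true) := by
    intro n
    induction n with
    | zero => simpa using heq
    | succ n ih =>
      have h2 := congrArg nB ih
      rw [hcoalg_n, hcoalg_n, List.cons_append, List.cons_append,
        ← List.replicate_succ'] at h2
      exact h2
  -- derive a contradiction at n = M + C
  set n := M + C with hn
  obtain ⟨p, hp⟩ := hq (h (List.replicate n true))
  have hqt : q (true :: p.1, p.2) = h (true :: List.replicate n true) := by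
    rw [hqu p, hp, hhu]
  have hqf : q (false :: p.1, p.2) = h (false :: List.replicate n true) := by
    rw [hqv p, hp, hhv]
  have hqeq : q (true :: p.1, p.2) = q (false :: p.1, p.2) := by
    rw [hqt, hqf, hchain n]
  have hcong := (hker _ _).mp hqeq
  have hguard : M + C < oB (q (true :: p.1, p.2)) := by
    rw [hqt, hcoalg_o]
    simp [hn]
  have := key _ _ hcong hguard
  simp at this
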